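/- Any function computed by a message-passing GNN assigns equal node outputs to any two nodes that receive the same color in every iteration of 1-WL color refinement (initialized with the node labels); consequently, a GNN cannot produce different outputs on two nodes whose 1-WL colorings agree at every round. -/
import Mathlib


open scoped Classical

/-- The type of 1-WL colors after `t` rounds, starting from initial colors in `L`. -/
def WLC (L : Type*) : ℕ → Type _
  | 0 => L
  | (t + 1) => WLC L t × Multiset (WLC L t)

/-- 1-WL color refinement initialized with the node labels `X`:
`c⁰(i) = X i` and `c^{m+1}(i) = (c^m(i), {{c^m(j) : j ∈ N(i)}})`. -/
noncomputable def wlc {V L : Type*} [Fintype V] (G : SimpleGraph V) (X : V → L) :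
    (t : ℕ) → V → WLC L t
  | 0 => X
  | (t + 1) => fun i => (wlc G X t i, (G.neighborFinset i).val.map (wlc G X t))

/-- The node values computed by a message-passing GNN with layer-`m` update `fupd m`
and aggregation `fagg m`: `v⁰ = X` and
`v^{m+1}_i = fupd m (v^m_i, fagg m {{v^m_j : j ∈ N(i)}})`. -/
noncomputable def gnnVal {V D A : Type*} [Fintype V] (G : SimpleGraph V)
    (fupd : ℕ → D → A → D) (fagg : ℕ → Multiset D → A) (X : V → D) :
    ℕ → V → D
  | 0 => X
  | (m + 1) => fun i => fupd m (gnnVal G fupd fagg X m i)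
      (fagg m ((G.neighborFinset i).val.map (gnnVal G fupd fagg X m)))


/-- Decoder: recompute GNN values from a WL color. -/
noncomputable def wlDecode {D A : Type*} (fupd : ℕ → D → A → D)
    (fagg : ℕ → Multiset D → A) : (m : ℕ) → WLC D m → D
  | 0 => id
  | (m + 1) => fun c =>
      fupd m (wlDecode fupd fagg m c.1) (fagg m (c.2.map (wlDecode fupd fagg m)))

theorem gnnVal_eq_decode {V D A : Type*} [Fintype V] (G : SimpleGraph V)
    (fupd : ℕ → D → A → D) (fagg : ℕ → Multiset D → A) (X : V → D) :
    ∀ (m : ℕ) (i : V),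
      gnnVal G fupd fagg X m i = wlDecode fupd fagg m (wlc G X m i) := by
  intro m
  induction m with
  | zero => intro i; rfl
  | succ m ih =>
      intro i
      simp only [gnnVal, wlc, wlDecode, Multiset.map_map]
      rw [ih i]
      congr 2
      exact Multiset.map_congr rfl fun j _ => ih j

/-- A message-passing GNN assigns equal values to any two nodes that
receive the same 1-WL color (refinement initialized with the node labels) at the
corresponding round; hence a GNN cannot separate nodes that 1-WL does not separate. -/
theorem gnn_bounded_by_wl {V D A : Type*} [Fintype V] (G : SimpleGraph V)
    (fupd : ℕ → D → A → D) (fagg : ℕ → Multiset D → A) (X : V → D) :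
    ∀ (m : ℕ) (i j : V), wlc G X m i = wlc G X m j →
      gnnVal G fupd fagg X m i = gnnVal G fupd fagg X m j := by
  intro m i j h
  rw [gnnVal_eq_decode, gnnVal_eq_decode, h]
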